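/- Let n ≥ 1 be an integer and let p ∈ ℚ[X] be any polynomial of degree at most n with p(0) = 0. Then for every integer k ≥ 1, p(−k) = −k · C(n+k, n) · ∑_{l=1}^{n} ((−1)^{l+1}/(l+k)) · C(n,l) · p(l). -/

import Mathlib

open Finset Polynomial

private lemma asc_prod (k : ℕ) : ∀ m : ℕ, ∏ j ∈ Finset.range m, (k + j) = k.ascFactorial m
  | 0 => by simp [Nat.ascFactorial]
  | m + 1 => by
    rw [Finset.prod_range_succ, asc_prod k m, Nat.ascFactorial, Nat.mul_comm]

private lemma prod_sub_range (i : ℕ) :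
    ∏ j ∈ Finset.range i, ((i : ℚ) - j) = i.factorial := by
  have h1 : ∏ j ∈ Finset.range i, (i - j) = i.factorial := by
    rw [← Finset.prod_range_reflect, ← Finset.prod_range_add_one_eq_factorial]
    refine Finset.prod_congr rfl fun j hj => ?_
    rw [Finset.mem_range] at hj; omega
  calc ∏ j ∈ Finset.range i, ((i : ℚ) - j)
      = ∏ j ∈ Finset.range i, ((i - j : ℕ) : ℚ) := by
        refine Finset.prod_congr rfl fun j hj => ?_
        rw [Finset.mem_range] at hj
        rw [Nat.cast_sub hj.le]
    _ = ((∏ j ∈ Finset.range i, (i - j) : ℕ) : ℚ) := by rw [Nat.cast_prod]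
    _ = i.factorial := by rw [h1]

private lemma prod_sub_Ico (n i : ℕ) (h : i ≤ n) :
    ∏ j ∈ Finset.Ico (i + 1) (n + 1), ((i : ℚ) - j) =
      (-1 : ℚ) ^ (n - i) * (n - i).factorial := by
  rw [Finset.prod_Ico_eq_prod_range]
  have hc : n + 1 - (i + 1) = n - i := by omega
  rw [hc]
  calc ∏ j ∈ Finset.range (n - i), ((i : ℚ) - (i + 1 + j : ℕ))
      = ∏ j ∈ Finset.range (n - i), ((-1 : ℚ) * ((j : ℚ) + 1)) := by
        refine Finset.prod_congr rfl fun j hj => ?_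
        push_cast; ring
    _ = (-1 : ℚ) ^ (n - i) * ∏ j ∈ Finset.range (n - i), ((j : ℚ) + 1) := by
        rw [Finset.prod_mul_distrib, Finset.prod_const, Finset.card_range]
    _ = (-1 : ℚ) ^ (n - i) * (n - i).factorial := by
        rw [show ∏ j ∈ Finset.range (n - i), ((j : ℚ) + 1)
            = ((∏ j ∈ Finset.range (n - i), (j + 1) : ℕ) : ℚ) by push_cast; rfl,
          Finset.prod_range_add_one_eq_factorial]

private lemma basis_eval (n k i : ℕ) (hk : 1 ≤ k) (h1 : 1 ≤ i) (h2 : i ≤ n) :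
    (Lagrange.basis (Finset.range (n + 1)) (Nat.cast : ℕ → ℚ) i).eval (-(k : ℚ)) =
      -(k : ℚ) * ((n + k).choose n : ℚ) *
        ((-1 : ℚ) ^ (i + 1) / ((i : ℚ) + (k : ℚ)) * (n.choose i : ℚ)) := by
  have hi : i ∈ Finset.range (n + 1) := Finset.mem_range.2 (by omega)
  rw [Lagrange.basis, eval_prod]
  have heval : ∀ j ∈ (Finset.range (n + 1)).erase i,
      (Lagrange.basisDivisor ((i : ℕ) : ℚ) ((j : ℕ) : ℚ)).eval (-(k : ℚ)) =
        ((i : ℚ) - j)⁻¹ * (-(k : ℚ) - j) := by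
    intro j _
    simp [Lagrange.basisDivisor]
  rw [Finset.prod_congr rfl heval, Finset.prod_mul_distrib, Finset.prod_inv_distrib]
  -- compute A := ∏ j in erase, ((i:ℚ) - j)
  have hsplit : (Finset.range (n + 1)).erase i =
      Finset.range i ∪ Finset.Ico (i + 1) (n + 1) := by
    ext j
    simp only [Finset.mem_erase, Finset.mem_range, Finset.mem_union, Finset.mem_Ico]
    omega
  have hdisj : Disjoint (Finset.range i) (Finset.Ico (i + 1) (n + 1)) := by
    rw [Finset.disjoint_left]
    intro j hj hj'
    rw [Finset.mem_range] at hj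
    rw [Finset.mem_Ico] at hj'
    omega
  have hA : ∏ j ∈ (Finset.range (n + 1)).erase i, ((i : ℚ) - j) =
      (i.factorial : ℚ) * ((-1 : ℚ) ^ (n - i) * (n - i).factorial) := by
    rw [hsplit, Finset.prod_union hdisj, prod_sub_range, prod_sub_Ico n i h2]
  -- compute B := ∏ j in erase, (-(k:ℚ) - j)
  have hBfull : ∏ j ∈ Finset.range (n + 1), (-(k : ℚ) - j) =
      (-1 : ℚ) ^ (n + 1) * (k.ascFactorial (n + 1) : ℚ) := by
    calc ∏ j ∈ Finset.range (n + 1), (-(k : ℚ) - j)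
        = ∏ j ∈ Finset.range (n + 1), ((-1 : ℚ) * ((k + j : ℕ) : ℚ)) := by
          refine Finset.prod_congr rfl fun j _ => ?_
          push_cast; ring
      _ = (-1 : ℚ) ^ (n + 1) * ((∏ j ∈ Finset.range (n + 1), (k + j) : ℕ) : ℚ) := by
          rw [Finset.prod_mul_distrib, Finset.prod_const, Finset.card_range, Nat.cast_prod]
      _ = (-1 : ℚ) ^ (n + 1) * (k.ascFactorial (n + 1) : ℚ) := by rw [asc_prod]
  have hne : -(k : ℚ) - i ≠ 0 := by
    have : (0 : ℚ) < (k : ℚ) + i := by positivity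
    intro h; apply this.ne'; linarith
  have hB : ∏ j ∈ (Finset.range (n + 1)).erase i, (-(k : ℚ) - j) =
      (-1 : ℚ) ^ (n + 1) * (k.ascFactorial (n + 1) : ℚ) / (-(k : ℚ) - i) := by
    have := Finset.mul_prod_erase (Finset.range (n + 1)) (fun j => -(k : ℚ) - j) hi
    field_simp
    rw [mul_comm]
    rw [← hBfull, ← this]
  rw [hA, hB]
  -- now express everything with factorials
  have hasc : (k.ascFactorial (n + 1) : ℚ) = ((n + k).factorial : ℚ) / ((k - 1).factorial : ℚ) := by
    have := Nat.factorial_mul_ascFactorial' k (n + 1) (by omega)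
    have hc : k + (n + 1) - 1 = n + k := by omega
    rw [hc] at this
    have : ((k - 1).factorial : ℚ) * (k.ascFactorial (n + 1) : ℚ) = ((n + k).factorial : ℚ) := by
      exact_mod_cast congrArg (Nat.cast : ℕ → ℚ) this
    field_simp at this ⊢
    linarith [this]
  rw [hasc, Nat.cast_choose ℚ (show n ≤ n + k by omega),
    Nat.cast_choose ℚ h2]
  have hnk : n + k - n = k := by omega
  rw [hnk]
  have hsign : (-1 : ℚ) ^ (n + 1) = (-1 : ℚ) ^ (n - i) * (-1 : ℚ) ^ (i + 1) := by
    rw [← pow_add]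
    congr 1
    omega
  rw [hsign]
  have hfi : (i.factorial : ℚ) ≠ 0 := by exact_mod_cast i.factorial_ne_zero
  have hfni : ((n - i).factorial : ℚ) ≠ 0 := by exact_mod_cast (n - i).factorial_ne_zero
  have hfn : (n.factorial : ℚ) ≠ 0 := by exact_mod_cast n.factorial_ne_zero
  have hfk : (k.factorial : ℚ) ≠ 0 := by exact_mod_cast k.factorial_ne_zero
  have hfk1 : ((k - 1).factorial : ℚ) ≠ 0 := by exact_mod_cast (k - 1).factorial_ne_zero
  have hik : (i : ℚ) + (k : ℚ) ≠ 0 := by positivity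
  have hsgn : (-1 : ℚ) ^ (n - i) ≠ 0 := by
    apply pow_ne_zero; norm_num
  have hkfact : (k.factorial : ℚ) = (k : ℚ) * ((k - 1).factorial : ℚ) := by
    have : k.factorial = k * (k - 1).factorial := by
      conv_lhs => rw [show k = (k - 1) + 1 by omega]
      rw [Nat.factorial_succ]
      congr 1 <;> omega
    exact_mod_cast this
  rw [hkfact]
  have hki : -(k : ℚ) - i = -((i : ℚ) + k) := by ring
  rw [hki, div_neg, mul_inv]
  field_simp

theorem eval_neg_of_polynomial (n : ℕ) (hn : 1 ≤ n) (p : Polynomial ℚ)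
    (hdeg : p.natDegree ≤ n) (h0 : p.eval 0 = 0) (k : ℕ) (hk : 1 ≤ k) :
    p.eval (-(k : ℚ)) =
      -(k : ℚ) * (Nat.choose (n + k) n : ℚ) *
        ∑ l ∈ Finset.Icc 1 n,
          ((-1 : ℚ) ^ (l + 1) / ((l : ℚ) + (k : ℚ))) * (Nat.choose n l : ℚ) *
            p.eval (l : ℚ) := by
  have hinj : Set.InjOn (Nat.cast : ℕ → ℚ) (Finset.range (n + 1)) :=
    fun a _ b _ h => Nat.cast_injective h
  have hdeg' : p.degree < (#(Finset.range (n + 1)) : ℕ) := by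
    rw [Finset.card_range]
    exact lt_of_le_of_lt degree_le_natDegree (by exact_mod_cast Nat.lt_succ_of_le hdeg)
  have hp := Lagrange.eq_interpolate hinj hdeg'
  conv_lhs => rw [hp]
  rw [Lagrange.interpolate_apply, eval_finset_sum]
  have hins : Finset.range (n + 1) = insert 0 (Finset.Icc 1 n) := by
    ext j
    simp only [Finset.mem_range, Finset.mem_insert, Finset.mem_Icc]
    omega
  rw [hins, Finset.sum_insert (by simp)]
  simp only [eval_mul, eval_C, Nat.cast_zero, h0, zero_mul, zero_add]
  rw [Finset.mul_sum]
  refine Finset.sum_congr rfl fun i hi => ?_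
  rw [Finset.mem_Icc] at hi
  rw [← hins]
  rw [basis_eval n k i hk hi.1 hi.2]
  ring
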